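/- Let Δ ≥ 1 and let a, x be integers with 0 ≤ x and x + 2 ≤ a ≤ Δ. Let Σ' = {X, M, O, U, A, B, P, Q} be eight labels with underlying sets S_X = {X}, S_M = {M,X}, S_O = {O,X}, S_U = {M,O,X}, S_A = {A,O,X}, S_B = {M,A,O,X}, S_P = {P,A,O,X}, S_Q = {M,P,A,O,X} (subsets of {M,P,A,O,X}). Let Y : Fin Δ → (nonempty subsets of Σ') be such that each Y(i) is right-closed, meaning that whenever L ∈ Y(i) and S_L ⊆ S_{L'} then L' ∈ Y(i). Suppose that every transversal g : Fin Δ → Σ' with g(i) ∈ Y(i) for all i satisfies at least one of: (a) the number of indices i with g(i) ∈ {M,U,B,Q} is at least Δ − x; (b) there exists an index i with g(i) ∈ {P,Q} such that g(j) ∈ {O,U,A,B,P,Q} for all j ≠ i; (c) the number of indices i with g(i) ∈ {A,B,P,Q} is at least a. Then at least one of the following holds: (1) the number of indices i with Y(i) ⊆ {M,U,B,Q} is at least Δ − x − 1; (2) there exists an index i with Y(i) ⊆ {P,Q} such that Y(j) ⊆ {O,U,A,B,P,Q} for all j ≠ i; (3) the number of indices i with Y(i) ⊆ {A,B,P,Q}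 is at least a − x − 1; (4) the number of indices i with Y(i) ⊆ {U,B,P,Q} is at least Δ − x. -/

import Mathlib

inductive Lab : Type
  | M | P | O | A | X
  deriving DecidableEq

instance : Fintype Lab :=
  ⟨{Lab.M, Lab.P, Lab.O, Lab.A, Lab.X}, fun x => by cases x <;> simp⟩

/-- Node constraint `N_Δ(a,x)`: the three allowed multisets of size `Δ`. -/
def nodeC (Δ a x : ℕ) (m : Multiset Lab) : Prop :=
  m = Multiset.replicate (Δ - x) Lab.M + Multiset.replicate x Lab.X ∨
  m = Multiset.replicate a Lab.A + Multiset.replicate (Δ - a) Lab.X ∨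
  m = Lab.P ::ₘ Multiset.replicate (Δ - 1) Lab.O

/-- Edge constraint `E`: all unordered pairs except `{M,M}, {A,A}, {P,P}, {P,A}, {P,O}`. -/
def edgeC (l₁ l₂ : Lab) : Prop :=
  ¬ ((l₁ = Lab.M ∧ l₂ = Lab.M) ∨ (l₁ = Lab.A ∧ l₂ = Lab.A) ∨ (l₁ = Lab.P ∧ l₂ = Lab.P) ∨
     (l₁ = Lab.P ∧ l₂ = Lab.A) ∨ (l₁ = Lab.A ∧ l₂ = Lab.P) ∨
     (l₁ = Lab.P ∧ l₂ = Lab.O) ∨ (l₁ = Lab.O ∧ l₂ = Lab.P))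

instance (l₁ l₂ : Lab) : Decidable (edgeC l₁ l₂) := by
  unfold edgeC; infer_instance

/-- A valid `Π_Δ(a,x)`-labeling: `ℓ u v` is the label that `u` assigns to the edge `{u,v}`. -/
def validLabeling {V : Type*} [Fintype V] (G : SimpleGraph V) [DecidableRel G.Adj]
    (Δ a x : ℕ) (ℓ : V → V → Lab) : Prop :=
  (∀ v : V, nodeC Δ a x ((G.neighborFinset v).val.map (ℓ v))) ∧
  (∀ u v : V, G.Adj u v → edgeC (ℓ u v) (ℓ v u))

/-- The eight labels of `re(Π_Δ(a,x))`. -/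
inductive Lab2 : Type
  | X | M | O | U | A | B | P | Q
  deriving DecidableEq

instance : Fintype Lab2 :=
  ⟨{Lab2.X, Lab2.M, Lab2.O, Lab2.U, Lab2.A, Lab2.B, Lab2.P, Lab2.Q}, fun x => by cases x <;> simp⟩

/-- Underlying label-set of each label of `re(Π_Δ(a,x))`. -/
def uset : Lab2 → Finset Lab
  | Lab2.X => {Lab.X}
  | Lab2.M => {Lab.M, Lab.X}
  | Lab2.O => {Lab.O, Lab.X}
  | Lab2.U => {Lab.M, Lab.O, Lab.X}
  | Lab2.A => {Lab.A, Lab.O, Lab.X}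
  | Lab2.B => {Lab.M, Lab.A, Lab.O, Lab.X}
  | Lab2.P => {Lab.P, Lab.A, Lab.O, Lab.X}
  | Lab2.Q => {Lab.M, Lab.P, Lab.A, Lab.O, Lab.X}

/-- A set of labels of `re(Π_Δ(a,x))` is right-closed if with any label it contains all
labels whose underlying sets are supersets. -/
def rightClosed2 (Y : Finset Lab2) : Prop :=
  ∀ L ∈ Y, ∀ L' : Lab2, uset L ⊆ uset L' → L' ∈ Y


namespace Stmt3Aux

open Finset

def pickM (Yi : Finset Lab2) : Lab2 :=
  if Lab2.M ∈ Yi then Lab2.M else if Lab2.U ∈ Yi then Lab2.U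
  else if Lab2.B ∈ Yi then Lab2.B else Lab2.Q

def pickA (Yi : Finset Lab2) : Lab2 :=
  if Lab2.A ∈ Yi then Lab2.A else Lab2.P

lemma pickM_mem {Yi : Finset Lab2} (hQ : Lab2.Q ∈ Yi) : pickM Yi ∈ Yi := by
  unfold pickM; split_ifs <;> assumption

lemma pickA_mem {Yi : Finset Lab2} (h : Lab2.A ∈ Yi ∨ Lab2.P ∈ Yi) : pickA Yi ∈ Yi := by
  unfold pickA; split_ifs with h1
  · exact h1
  · rcases h with h | h
    · exact absurd h h1
    · exact h

lemma pickA_not_MUBQ (Yi : Finset Lab2) :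
    pickA Yi ∉ ({Lab2.M, Lab2.U, Lab2.B, Lab2.Q} : Finset Lab2) := by
  unfold pickA; split_ifs <;> decide

lemma pickM_mem_ABPQ {Yi : Finset Lab2}
    (h : pickM Yi ∈ ({Lab2.A, Lab2.B, Lab2.P, Lab2.Q} : Finset Lab2)) :
    Lab2.M ∉ Yi ∧ Lab2.U ∉ Yi := by
  unfold pickM at h
  split_ifs at h with h1 h2 h3
  · exact absurd h (by decide)
  · exact absurd h (by decide)
  · exact ⟨h1, h2⟩
  · exact ⟨h1, h2⟩

lemma sub_MUBQ_iff (Yi : Finset Lab2) :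
    Yi ⊆ ({Lab2.M, Lab2.U, Lab2.B, Lab2.Q} : Finset Lab2) ↔
      (¬(Lab2.X ∈ Yi ∨ Lab2.O ∈ Yi) ∧ ¬(Lab2.A ∈ Yi ∨ Lab2.P ∈ Yi)) := by
  constructor
  · intro h
    refine ⟨?_, ?_⟩ <;> rintro (h' | h') <;> exact absurd (h h') (by decide)
  · rintro ⟨h1, h2⟩ L hL
    cases L
    case X => exact absurd (Or.inl hL) h1
    case O => exact absurd (Or.inr hL) h1
    case A => exact absurd (Or.inl hL) h2
    case P => exact absurd (Or.inr hL) h2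
    all_goals decide

lemma sub_ABPQ_iff (Yi : Finset Lab2) :
    Yi ⊆ ({Lab2.A, Lab2.B, Lab2.P, Lab2.Q} : Finset Lab2) ↔
      (¬(Lab2.X ∈ Yi ∨ Lab2.O ∈ Yi) ∧ ¬(Lab2.M ∈ Yi ∨ Lab2.U ∈ Yi)) := by
  constructor
  · intro h
    refine ⟨?_, ?_⟩ <;> rintro (h' | h') <;> exact absurd (h h') (by decide)
  · rintro ⟨h1, h2⟩ L hL
    cases L
    case X => exact absurd (Or.inl hL) h1
    case O => exact absurd (Or.inr hL) h1
    case M => exact absurd (Or.inl hL) h2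
    case U => exact absurd (Or.inr hL) h2
    all_goals decide

lemma sub_UBPQ_iff {Yi : Finset Lab2} (hX : Lab2.X ∉ Yi) (hM : Lab2.M ∉ Yi) :
    Yi ⊆ ({Lab2.U, Lab2.B, Lab2.P, Lab2.Q} : Finset Lab2) ↔
      (Lab2.O ∉ Yi ∧ Lab2.A ∉ Yi) := by
  constructor
  · intro h
    exact ⟨fun h' => absurd (h h') (by decide), fun h' => absurd (h h') (by decide)⟩
  · rintro ⟨h1, h2⟩ L hL
    cases L
    case X => exact absurd hL hX
    case M => exact absurd hL hM
    case O => exact absurd hL h1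
    case A => exact absurd hL h2
    all_goals decide

lemma sub_OUABPQ {Yi : Finset Lab2} (hX : Lab2.X ∉ Yi) (hM : Lab2.M ∉ Yi) :
    Yi ⊆ ({Lab2.O, Lab2.U, Lab2.A, Lab2.B, Lab2.P, Lab2.Q} : Finset Lab2) := by
  intro L hL
  cases L
  case X => exact absurd hL hX
  case M => exact absurd hL hM
  all_goals decide

lemma sub_PQ {Yi : Finset Lab2} (hX : Lab2.X ∉ Yi) (hO : Lab2.O ∉ Yi) (hM : Lab2.M ∉ Yi)
    (hU : Lab2.U ∉ Yi) (hA : Lab2.A ∉ Yi) (hB : Lab2.B ∉ Yi) :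
    Yi ⊆ ({Lab2.P, Lab2.Q} : Finset Lab2) := by
  intro L hL
  cases L
  case X => exact absurd hL hX
  case O => exact absurd hL hO
  case M => exact absurd hL hM
  case U => exact absurd hL hU
  case A => exact absurd hL hA
  case B => exact absurd hL hB
  all_goals decide

lemma exists_S {ι : Type*} [DecidableEq ι] (fl : Finset ι) (j0 : ι) (k : ℕ)
    (hk : k ≤ fl.card) (hk1 : j0 ∈ fl → 1 ≤ k) :
    ∃ S, S ⊆ fl ∧ S.card = k ∧ (j0 ∈ fl → j0 ∈ S) := by
  by_cases hj : j0 ∈ fl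
  · obtain ⟨T, hT, hTc⟩ := Finset.exists_subset_card_eq
      (s := fl.erase j0) (n := k - 1) (by rw [Finset.card_erase_of_mem hj]; omega)
    refine ⟨insert j0 T, ?_, ?_, fun _ => Finset.mem_insert_self _ _⟩
    · intro i hi
      rcases Finset.mem_insert.1 hi with rfl | hi
      · exact hj
      · exact Finset.mem_of_mem_erase (hT hi)
    · rw [Finset.card_insert_of_notMem (fun h => (Finset.mem_erase.1 (hT h)).1 rfl), hTc]
      have := hk1 hj; omega
  · obtain ⟨S, hS, hSc⟩ := Finset.exists_subset_card_eq hk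
    exact ⟨S, hS, hSc, fun h => absurd h hj⟩

lemma card_split2 {ι : Type*} (s : Finset ι) (q : ι → Prop) [DecidablePred q] :
    s.card = (s.filter q).card + (s.filter (fun i => ¬ q i)).card := by
  classical
  exact (Finset.card_filter_add_card_filter_not q).symm

end Stmt3Aux

set_option maxHeartbeats 4000000 in
/-- (Core of the speedup lemma.) If every transversal of a tuple of
nonempty right-closed sets of `Σ'`-labels satisfies the node constraint of
`re(Π_Δ(a,x))`, then the tuple can be relaxed to a node configuration of `Π_rel`. -/
theorem stmt_3 (Δ a x : ℕ) (hΔ : 1 ≤ Δ) (hax : x + 2 ≤ a) (haΔ : a ≤ Δ)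
    (Y : Fin Δ → Finset Lab2)
    (hne : ∀ i, (Y i).Nonempty)
    (hrc : ∀ i, rightClosed2 (Y i))
    (htr : ∀ g : Fin Δ → Lab2, (∀ i, g i ∈ Y i) →
      (Δ - x ≤ (Finset.univ.filter
          (fun i => g i ∈ ({Lab2.M, Lab2.U, Lab2.B, Lab2.Q} : Finset Lab2))).card ∨
       (∃ i, g i ∈ ({Lab2.P, Lab2.Q} : Finset Lab2) ∧ ∀ j, j ≠ i →
          g j ∈ ({Lab2.O, Lab2.U, Lab2.A, Lab2.B, Lab2.P, Lab2.Q} : Finset Lab2)) ∨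
       a ≤ (Finset.univ.filter
          (fun i => g i ∈ ({Lab2.A, Lab2.B, Lab2.P, Lab2.Q} : Finset Lab2))).card)) :
    (Δ - x - 1 ≤ (Finset.univ.filter
        (fun i => Y i ⊆ ({Lab2.M, Lab2.U, Lab2.B, Lab2.Q} : Finset Lab2))).card ∨
     (∃ i, Y i ⊆ ({Lab2.P, Lab2.Q} : Finset Lab2) ∧ ∀ j, j ≠ i →
        Y j ⊆ ({Lab2.O, Lab2.U, Lab2.A, Lab2.B, Lab2.P, Lab2.Q} : Finset Lab2)) ∨
     a - x - 1 ≤ (Finset.univ.filter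
        (fun i => Y i ⊆ ({Lab2.A, Lab2.B, Lab2.P, Lab2.Q} : Finset Lab2))).card ∨
     Δ - x ≤ (Finset.univ.filter
        (fun i => Y i ⊆ ({Lab2.U, Lab2.B, Lab2.P, Lab2.Q} : Finset Lab2))).card) := by
    classical
  by_contra hcon
  push_neg at hcon
  obtain ⟨h1, h2, h3, h4⟩ := hcon
  have hQmem : ∀ i, Lab2.Q ∈ Y i := fun i => by
    obtain ⟨L, hL⟩ := hne i
    exact hrc i L hL Lab2.Q (by cases L <;> decide)
  have hmEq : (Finset.univ.filter
      (fun i => Y i ⊆ ({Lab2.M, Lab2.U, Lab2.B, Lab2.Q} : Finset Lab2)))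
      = Finset.univ.filter
        (fun i => ¬(Lab2.X ∈ Y i ∨ Lab2.O ∈ Y i) ∧ ¬(Lab2.A ∈ Y i ∨ Lab2.P ∈ Y i)) := by
    ext i
    simp only [Finset.mem_filter, Finset.mem_univ, true_and, Stmt3Aux.sub_MUBQ_iff]
  have haEq : (Finset.univ.filter
      (fun i => Y i ⊆ ({Lab2.A, Lab2.B, Lab2.P, Lab2.Q} : Finset Lab2)))
      = Finset.univ.filter
        (fun i => ¬(Lab2.X ∈ Y i ∨ Lab2.O ∈ Y i) ∧ ¬(Lab2.M ∈ Y i ∨ Lab2.U ∈ Y i)) := by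
    ext i
    simp only [Finset.mem_filter, Finset.mem_univ, true_and, Stmt3Aux.sub_ABPQ_iff]
  rw [hmEq] at h1
  rw [haEq] at h3
  by_cases hAB : ∃ j0, Lab2.X ∈ Y j0 ∨ (Lab2.M ∈ Y j0 ∧ Lab2.O ∉ Y j0)
  · -- Case AB : there is a "cheap" index providing an X- or M-witness
    obtain ⟨j0, hj0⟩ := hAB
    set mset := Finset.univ.filter
      (fun i => ¬(Lab2.X ∈ Y i ∨ Lab2.O ∈ Y i) ∧ ¬(Lab2.A ∈ Y i ∨ Lab2.P ∈ Y i)) with hmset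
    set aset := Finset.univ.filter
      (fun i => ¬(Lab2.X ∈ Y i ∨ Lab2.O ∈ Y i) ∧ ¬(Lab2.M ∈ Y i ∨ Lab2.U ∈ Y i)) with haset
    set fset := Finset.univ.filter
      (fun i => ¬(Lab2.X ∈ Y i ∨ Lab2.O ∈ Y i) ∧ (Lab2.M ∈ Y i ∨ Lab2.U ∈ Y i)
        ∧ (Lab2.A ∈ Y i ∨ Lab2.P ∈ Y i)) with hfset
    set k := min fset.card (Δ - x - 1 - mset.card) with hk
    have hkF : k ≤ fset.card := min_le_left _ _
    have hkB : k ≤ Δ - x - 1 - mset.card := min_le_right _ _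
    have hkor : k = fset.card ∨ k = Δ - x - 1 - mset.card := min_choice _ _
    obtain ⟨S, hSsub, hScard, hSj0⟩ := Stmt3Aux.exists_S fset j0 k hkF (by
      intro hj
      have hfpos : 1 ≤ fset.card := Finset.card_pos.2 ⟨j0, hj⟩
      omega)
    set g : Fin Δ → Lab2 := fun i =>
      if Lab2.X ∈ Y i then Lab2.X
      else if Lab2.O ∈ Y i then Lab2.O
      else if ¬(Lab2.A ∈ Y i ∨ Lab2.P ∈ Y i) ∨ i ∈ S then Stmt3Aux.pickM (Y i)
      else Stmt3Aux.pickA (Y i) with hgdef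
    have hg : ∀ i, g i ∈ Y i := by
      intro i
      simp only [hgdef]
      split_ifs with hx ho hc
      · exact hx
      · exact ho
      · exact Stmt3Aux.pickM_mem (hQmem i)
      · rcases not_or.1 hc with ⟨hc1, -⟩
        exact Stmt3Aux.pickA_mem (not_not.1 hc1)
    have hw : g j0 = Lab2.X ∨ g j0 = Lab2.M := by
      by_cases hx : Lab2.X ∈ Y j0
      · left; simp only [hgdef, if_pos hx]
      · rcases hj0 with hj0 | ⟨hM0, hO0⟩
        · exact absurd hj0 hx
        · right
          have hcond : ¬(Lab2.A ∈ Y j0 ∨ Lab2.P ∈ Y j0) ∨ j0 ∈ S := by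
            by_cases hap : Lab2.A ∈ Y j0 ∨ Lab2.P ∈ Y j0
            · exact Or.inr (hSj0 (Finset.mem_filter.2 ⟨Finset.mem_univ _,
                not_or.2 ⟨hx, hO0⟩, Or.inl hM0, hap⟩))
            · exact Or.inl hap
          simp only [hgdef, if_neg hx, if_neg hO0, if_pos hcond]
          unfold Stmt3Aux.pickM
          rw [if_pos hM0]
    have L1 : Finset.univ.filter
        (fun i => g i ∈ ({Lab2.M, Lab2.U, Lab2.B, Lab2.Q} : Finset Lab2)) ⊆ mset ∪ S := by
      intro i hi
      obtain ⟨-, hi⟩ := Finset.mem_filter.1 hi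
      simp only [hgdef] at hi
      split_ifs at hi with hx ho hc
      · exact absurd hi (by decide)
      · exact absurd hi (by decide)
      · rcases hc with hc | hc
        · exact Finset.mem_union_left _
            (Finset.mem_filter.2 ⟨Finset.mem_univ _, not_or.2 ⟨hx, ho⟩, hc⟩)
        · exact Finset.mem_union_right _ hc
      · exact absurd hi (Stmt3Aux.pickA_not_MUBQ _)
    have L2 : Finset.univ.filter
        (fun i => g i ∈ ({Lab2.A, Lab2.B, Lab2.P, Lab2.Q} : Finset Lab2))
        ⊆ aset ∪ (fset \ S) := by
      intro i hi
      obtain ⟨-, hi⟩ := Finset.mem_filter.1 hi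
      simp only [hgdef] at hi
      split_ifs at hi with hx ho hc
      · exact absurd hi (by decide)
      · exact absurd hi (by decide)
      · obtain ⟨hM, hU⟩ := Stmt3Aux.pickM_mem_ABPQ hi
        exact Finset.mem_union_left _
          (Finset.mem_filter.2 ⟨Finset.mem_univ _, not_or.2 ⟨hx, ho⟩, not_or.2 ⟨hM, hU⟩⟩)
      · rcases not_or.1 hc with ⟨hc1, hc2⟩
        have hap := not_not.1 hc1
        by_cases hmu : Lab2.M ∈ Y i ∨ Lab2.U ∈ Y i
        · exact Finset.mem_union_right _ (Finset.mem_sdiff.2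
            ⟨Finset.mem_filter.2 ⟨Finset.mem_univ _, not_or.2 ⟨hx, ho⟩, hmu, hap⟩, hc2⟩)
        · exact Finset.mem_union_left _
            (Finset.mem_filter.2 ⟨Finset.mem_univ _, not_or.2 ⟨hx, ho⟩, hmu⟩)
    have c1 : (Finset.univ.filter
        (fun i => g i ∈ ({Lab2.M, Lab2.U, Lab2.B, Lab2.Q} : Finset Lab2))).card
        ≤ mset.card + k := by
      calc (Finset.univ.filter
          (fun i => g i ∈ ({Lab2.M, Lab2.U, Lab2.B, Lab2.Q} : Finset Lab2))).card
          ≤ (mset ∪ S).card := Finset.card_le_card L1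
        _ ≤ mset.card + S.card := Finset.card_union_le _ _
        _ = mset.card + k := by rw [hScard]
    have c2 : (Finset.univ.filter
        (fun i => g i ∈ ({Lab2.A, Lab2.B, Lab2.P, Lab2.Q} : Finset Lab2))).card
        ≤ aset.card + (fset.card - k) := by
      calc (Finset.univ.filter
          (fun i => g i ∈ ({Lab2.A, Lab2.B, Lab2.P, Lab2.Q} : Finset Lab2))).card
          ≤ (aset ∪ (fset \ S)).card := Finset.card_le_card L2
        _ ≤ aset.card + (fset \ S).card := Finset.card_union_le _ _
        _ = aset.card + (fset.card - k) := by rw [Finset.card_sdiff_of_subset hSsub, hScard]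
    set a1set := Finset.univ.filter
      (fun i => ¬(Lab2.X ∈ Y i ∨ Lab2.O ∈ Y i) ∧ ¬(Lab2.M ∈ Y i ∨ Lab2.U ∈ Y i)
        ∧ (Lab2.A ∈ Y i ∨ Lab2.P ∈ Y i)) with ha1set
    set bqset := Finset.univ.filter
      (fun i => ¬(Lab2.X ∈ Y i ∨ Lab2.O ∈ Y i) ∧ ¬(Lab2.M ∈ Y i ∨ Lab2.U ∈ Y i)
        ∧ ¬(Lab2.A ∈ Y i ∨ Lab2.P ∈ Y i)) with hbqset
    have d1 : Disjoint fset a1set := by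
      rw [Finset.disjoint_left]
      intro i hi1 hi2
      simp only [hfset, ha1set, Finset.mem_filter, Finset.mem_univ, true_and] at hi1 hi2
      exact hi2.2.1 hi1.2.1
    have d2 : Disjoint (fset ∪ a1set) mset := by
      rw [Finset.disjoint_left]
      intro i hi1 hi2
      simp only [Finset.mem_union, hfset, ha1set, hmset, Finset.mem_filter,
        Finset.mem_univ, true_and] at hi1 hi2
      exact hi1.elim (fun h => hi2.2 h.2.2) (fun h => hi2.2 h.2.2)
    have t1 : fset.card + a1set.card + mset.card ≤ Δ := by
      have e1 := Finset.card_union_of_disjoint d1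
      have e2 := Finset.card_union_of_disjoint d2
      have e3 : ((fset ∪ a1set) ∪ mset).card ≤ Δ := by
        calc ((fset ∪ a1set) ∪ mset).card
            ≤ (Finset.univ : Finset (Fin Δ)).card := Finset.card_le_card (Finset.subset_univ _)
          _ = Δ := by simp
      omega
    have t2 : bqset.card ≤ aset.card := by
      refine Finset.card_le_card ?_
      intro i hi
      simp only [hbqset, haset, Finset.mem_filter, Finset.mem_univ, true_and] at hi ⊢
      exact ⟨hi.1, hi.2.1⟩
    have t3 : aset.card ≤ a1set.card + bqset.card := by
      have hsub : aset ⊆ a1set ∪ bqset := by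
        intro i hi
        simp only [Finset.mem_union, hbqset, ha1set, haset, Finset.mem_filter,
          Finset.mem_univ, true_and] at hi ⊢
        rcases Classical.em (Lab2.A ∈ Y i ∨ Lab2.P ∈ Y i) with h | h
        · exact Or.inl ⟨hi.1, hi.2, h⟩
        · exact Or.inr ⟨hi.1, hi.2, h⟩
      calc aset.card ≤ (a1set ∪ bqset).card := Finset.card_le_card hsub
        _ ≤ a1set.card + bqset.card := Finset.card_union_le _ _
    rcases htr g hg with hcase | hcase | hcase
    · omega
    · obtain ⟨i, hiPQ, hall⟩ := hcase
      have hne' : j0 ≠ i := by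
        rintro rfl
        rcases hw with h | h <;> rw [h] at hiPQ <;> exact absurd hiPQ (by decide)
      have hmem := hall j0 hne'
      rcases hw with h | h <;> rw [h] at hmem <;> exact absurd hmem (by decide)
    · omega
  · -- no cheap witness
    have hX' : ∀ j, Lab2.X ∉ Y j := fun j hj => hAB ⟨j, Or.inl hj⟩
    have hMO : ∀ j, Lab2.M ∈ Y j → Lab2.O ∈ Y j := fun j hM => by
      by_contra hO
      exact hAB ⟨j, Or.inr ⟨hM, hO⟩⟩
    by_cases hMex : ∃ j0, Lab2.M ∈ Y j0
    · -- Case C : an expensive M-witness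
      obtain ⟨j0, hM0⟩ := hMex
      have hO0 : Lab2.O ∈ Y j0 := hMO j0 hM0
      set mset := Finset.univ.filter
        (fun i => ¬(Lab2.X ∈ Y i ∨ Lab2.O ∈ Y i) ∧ ¬(Lab2.A ∈ Y i ∨ Lab2.P ∈ Y i)) with hmset
      set aset := Finset.univ.filter
        (fun i => ¬(Lab2.X ∈ Y i ∨ Lab2.O ∈ Y i) ∧ ¬(Lab2.M ∈ Y i ∨ Lab2.U ∈ Y i)) with haset
      set fset := Finset.univ.filter
        (fun i => ¬(Lab2.X ∈ Y i ∨ Lab2.O ∈ Y i) ∧ (Lab2.M ∈ Y i ∨ Lab2.U ∈ Y i)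
          ∧ (Lab2.A ∈ Y i ∨ Lab2.P ∈ Y i)) with hfset
      set k := min fset.card (Δ - x - 2 - mset.card) with hk
      have hkF : k ≤ fset.card := min_le_left _ _
      have hkB : k ≤ Δ - x - 2 - mset.card := min_le_right _ _
      have hkor : k = fset.card ∨ k = Δ - x - 2 - mset.card := min_choice _ _
      obtain ⟨S, hSsub, hScard⟩ := Finset.exists_subset_card_eq hkF
      set g : Fin Δ → Lab2 := fun i =>
        if i = j0 then Lab2.M
        else if Lab2.X ∈ Y i then Lab2.X
        else if Lab2.O ∈ Y i then Lab2.O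
        else if ¬(Lab2.A ∈ Y i ∨ Lab2.P ∈ Y i) ∨ i ∈ S then Stmt3Aux.pickM (Y i)
        else Stmt3Aux.pickA (Y i) with hgdef
      have hg : ∀ i, g i ∈ Y i := by
        intro i
        simp only [hgdef]
        split_ifs with h0 hx ho hc
        · rw [h0]; exact hM0
        · exact hx
        · exact ho
        · exact Stmt3Aux.pickM_mem (hQmem i)
        · rcases not_or.1 hc with ⟨hc1, -⟩
          exact Stmt3Aux.pickA_mem (not_not.1 hc1)
      have hw : g j0 = Lab2.M := by simp [hgdef]
      have L1 : Finset.univ.filter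
          (fun i => g i ∈ ({Lab2.M, Lab2.U, Lab2.B, Lab2.Q} : Finset Lab2))
          ⊆ insert j0 (mset ∪ S) := by
        intro i hi
        obtain ⟨-, hi⟩ := Finset.mem_filter.1 hi
        simp only [hgdef] at hi
        split_ifs at hi with h0 hx ho hc
        · rw [h0]; exact Finset.mem_insert_self _ _
        · exact absurd hi (by decide)
        · exact absurd hi (by decide)
        · refine Finset.mem_insert_of_mem ?_
          rcases hc with hc | hc
          · exact Finset.mem_union_left _
              (Finset.mem_filter.2 ⟨Finset.mem_univ _, not_or.2 ⟨hx, ho⟩, hc⟩)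
          · exact Finset.mem_union_right _ hc
        · exact absurd hi (Stmt3Aux.pickA_not_MUBQ _)
      have L2 : Finset.univ.filter
          (fun i => g i ∈ ({Lab2.A, Lab2.B, Lab2.P, Lab2.Q} : Finset Lab2))
          ⊆ aset ∪ (fset \ S) := by
        intro i hi
        obtain ⟨-, hi⟩ := Finset.mem_filter.1 hi
        simp only [hgdef] at hi
        split_ifs at hi with h0 hx ho hc
        · exact absurd hi (by decide)
        · exact absurd hi (by decide)
        · exact absurd hi (by decide)
        · obtain ⟨hM, hU⟩ := Stmt3Aux.pickM_mem_ABPQ hi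
          exact Finset.mem_union_left _
            (Finset.mem_filter.2 ⟨Finset.mem_univ _, not_or.2 ⟨hx, ho⟩, not_or.2 ⟨hM, hU⟩⟩)
        · rcases not_or.1 hc with ⟨hc1, hc2⟩
          have hap := not_not.1 hc1
          by_cases hmu : Lab2.M ∈ Y i ∨ Lab2.U ∈ Y i
          · exact Finset.mem_union_right _ (Finset.mem_sdiff.2
              ⟨Finset.mem_filter.2 ⟨Finset.mem_univ _, not_or.2 ⟨hx, ho⟩, hmu, hap⟩, hc2⟩)
          · exact Finset.mem_union_left _
              (Finset.mem_filter.2 ⟨Finset.mem_univ _, not_or.2 ⟨hx, ho⟩, hmu⟩)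
      have c1 : (Finset.univ.filter
          (fun i => g i ∈ ({Lab2.M, Lab2.U, Lab2.B, Lab2.Q} : Finset Lab2))).card
          ≤ mset.card + k + 1 := by
        calc (Finset.univ.filter
            (fun i => g i ∈ ({Lab2.M, Lab2.U, Lab2.B, Lab2.Q} : Finset Lab2))).card
            ≤ (insert j0 (mset ∪ S)).card := Finset.card_le_card L1
          _ ≤ (mset ∪ S).card + 1 := Finset.card_insert_le _ _
          _ ≤ mset.card + S.card + 1 := by
              have := Finset.card_union_le mset S; omega
          _ = mset.card + k + 1 := by rw [hScard]
      have c2 : (Finset.univ.filter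
          (fun i => g i ∈ ({Lab2.A, Lab2.B, Lab2.P, Lab2.Q} : Finset Lab2))).card
          ≤ aset.card + (fset.card - k) := by
        calc (Finset.univ.filter
            (fun i => g i ∈ ({Lab2.A, Lab2.B, Lab2.P, Lab2.Q} : Finset Lab2))).card
            ≤ (aset ∪ (fset \ S)).card := Finset.card_le_card L2
          _ ≤ aset.card + (fset \ S).card := Finset.card_union_le _ _
          _ = aset.card + (fset.card - k) := by rw [Finset.card_sdiff_of_subset hSsub, hScard]
      set a1set := Finset.univ.filter
        (fun i => ¬(Lab2.X ∈ Y i ∨ Lab2.O ∈ Y i) ∧ ¬(Lab2.M ∈ Y i ∨ Lab2.U ∈ Y i)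
          ∧ (Lab2.A ∈ Y i ∨ Lab2.P ∈ Y i)) with ha1set
      set bqset := Finset.univ.filter
        (fun i => ¬(Lab2.X ∈ Y i ∨ Lab2.O ∈ Y i) ∧ ¬(Lab2.M ∈ Y i ∨ Lab2.U ∈ Y i)
          ∧ ¬(Lab2.A ∈ Y i ∨ Lab2.P ∈ Y i)) with hbqset
      have d1 : Disjoint fset a1set := by
        rw [Finset.disjoint_left]
        intro i hi1 hi2
        simp only [hfset, ha1set, Finset.mem_filter, Finset.mem_univ, true_and] at hi1 hi2
        exact hi2.2.1 hi1.2.1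
      have d2 : Disjoint (fset ∪ a1set) mset := by
        rw [Finset.disjoint_left]
        intro i hi1 hi2
        simp only [Finset.mem_union, hfset, ha1set, hmset, Finset.mem_filter,
          Finset.mem_univ, true_and] at hi1 hi2
        exact hi1.elim (fun h => hi2.2 h.2.2) (fun h => hi2.2 h.2.2)
      have t1 : fset.card + a1set.card + mset.card ≤ Δ - 1 := by
        have e1 := Finset.card_union_of_disjoint d1
        have e2 := Finset.card_union_of_disjoint d2
        have e3 : ((fset ∪ a1set) ∪ mset).card ≤ Δ - 1 := by
          have hsub : (fset ∪ a1set) ∪ mset ⊆ Finset.univ.erase j0 := by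
            intro i hi
            simp only [Finset.mem_union, hfset, ha1set, hmset, Finset.mem_filter,
              Finset.mem_univ, true_and] at hi
            refine Finset.mem_erase.2 ⟨?_, Finset.mem_univ _⟩
            rintro rfl
            rcases hi with (h | h) | h <;> exact h.1 (Or.inr hO0)
          calc ((fset ∪ a1set) ∪ mset).card
              ≤ (Finset.univ.erase j0).card := Finset.card_le_card hsub
            _ = Δ - 1 := by rw [Finset.card_erase_of_mem (Finset.mem_univ _)]; simp
        omega
      have t2 : bqset.card ≤ aset.card := by
        refine Finset.card_le_card ?_
        intro i hi
        simp only [hbqset, haset, Finset.mem_filter, Finset.mem_univ, true_and] at hi ⊢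
        exact ⟨hi.1, hi.2.1⟩
      have t3 : aset.card ≤ a1set.card + bqset.card := by
        have hsub : aset ⊆ a1set ∪ bqset := by
          intro i hi
          simp only [Finset.mem_union, hbqset, ha1set, haset, Finset.mem_filter,
            Finset.mem_univ, true_and] at hi ⊢
          rcases Classical.em (Lab2.A ∈ Y i ∨ Lab2.P ∈ Y i) with h | h
          · exact Or.inl ⟨hi.1, hi.2, h⟩
          · exact Or.inr ⟨hi.1, hi.2, h⟩
        calc aset.card ≤ (a1set ∪ bqset).card := Finset.card_le_card hsub
          _ ≤ a1set.card + bqset.card := Finset.card_union_le _ _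
      rcases htr g hg with hcase | hcase | hcase
      · omega
      · obtain ⟨i, hiPQ, hall⟩ := hcase
        have hne' : j0 ≠ i := by
          rintro rfl
          rw [hw] at hiPQ
          exact absurd hiPQ (by decide)
        have hmem := hall j0 hne'
        rw [hw] at hmem
        exact absurd hmem (by decide)
      · omega
    · -- Case D : no X and no M anywhere
      have hM' : ∀ j, Lab2.M ∉ Y j := fun j hj => hMex ⟨j, hj⟩
      have hBmem : ∀ i, Lab2.O ∉ Y i → Lab2.U ∉ Y i → Lab2.A ∉ Y i → Lab2.B ∈ Y i := by
        intro i hO hU hA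
        by_contra hB
        obtain ⟨j, hj, hj2⟩ := h2 i (Stmt3Aux.sub_PQ (hX' i) hO (hM' i) hU hA hB)
        exact hj2 (Stmt3Aux.sub_OUABPQ (hX' j) (hM' j))
      set useD := Finset.univ.filter
        (fun i => Lab2.O ∉ Y i ∧ Lab2.A ∉ Y i) with huseD
      set asetD := Finset.univ.filter
        (fun i => Lab2.O ∉ Y i ∧ Lab2.U ∉ Y i) with hasetD
      set flexD := Finset.univ.filter
        (fun i => Lab2.O ∉ Y i ∧ Lab2.U ∈ Y i ∧ Lab2.A ∈ Y i) with hflexD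
      have h4' : useD.card < Δ - x := by
        have hEq : (Finset.univ.filter
            (fun i => Y i ⊆ ({Lab2.U, Lab2.B, Lab2.P, Lab2.Q} : Finset Lab2))) = useD := by
          ext i
          simp only [huseD, Finset.mem_filter, Finset.mem_univ, true_and]
          exact Stmt3Aux.sub_UBPQ_iff (hX' i) (hM' i)
        rw [hEq] at h4
        exact h4
      have h3' : asetD.card < a - x - 1 := by
        have hEq : (Finset.univ.filter
            (fun i => ¬(Lab2.X ∈ Y i ∨ Lab2.O ∈ Y i) ∧ ¬(Lab2.M ∈ Y i ∨ Lab2.U ∈ Y i)))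
            = asetD := by
          ext i
          simp only [hasetD, Finset.mem_filter, Finset.mem_univ, true_and]
          constructor
          · exact fun h => ⟨fun ho => h.1 (Or.inr ho), fun hu => h.2 (Or.inr hu)⟩
          · exact fun h => ⟨fun hc => hc.elim (hX' i) h.1, fun hc => hc.elim (hM' i) h.2⟩
        rw [hEq] at h3
        exact h3
      set k := min flexD.card (Δ - x - 1 - useD.card) with hk
      have hkF : k ≤ flexD.card := min_le_left _ _
      have hkB : k ≤ Δ - x - 1 - useD.card := min_le_right _ _
      have hkor : k = flexD.card ∨ k = Δ - x - 1 - useD.card := min_choice _ _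
      obtain ⟨S, hSsub, hScard⟩ := Finset.exists_subset_card_eq hkF
      set g : Fin Δ → Lab2 := fun i =>
        if Lab2.O ∈ Y i then Lab2.O
        else if Lab2.A ∉ Y i ∨ i ∈ S then (if Lab2.U ∈ Y i then Lab2.U else Lab2.B)
        else Lab2.A with hgdef
      have hg : ∀ i, g i ∈ Y i := by
        intro i
        simp only [hgdef]
        split_ifs with ho hc hu
        · exact ho
        · exact hu
        · rcases hc with hA | hS
          · exact hBmem i ho hu hA
          · exact absurd ((Finset.mem_filter.1 (hSsub hS)).2.2.1) hu
        · rcases not_or.1 hc with ⟨hA, -⟩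
          exact not_not.1 hA
      have L1 : Finset.univ.filter
          (fun i => g i ∈ ({Lab2.M, Lab2.U, Lab2.B, Lab2.Q} : Finset Lab2))
          ⊆ useD ∪ S := by
        intro i hi
        obtain ⟨-, hi⟩ := Finset.mem_filter.1 hi
        simp only [hgdef] at hi
        split_ifs at hi with ho hc hu
        · exact absurd hi (by decide)
        · rcases hc with hA | hS
          · exact Finset.mem_union_left _
              (Finset.mem_filter.2 ⟨Finset.mem_univ _, ho, hA⟩)
          · exact Finset.mem_union_right _ hS
        · rcases hc with hA | hS
          · exact Finset.mem_union_left _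
              (Finset.mem_filter.2 ⟨Finset.mem_univ _, ho, hA⟩)
          · exact Finset.mem_union_right _ hS
        · exact absurd hi (by decide)
      have L2 : Finset.univ.filter
          (fun i => g i ∈ ({Lab2.A, Lab2.B, Lab2.P, Lab2.Q} : Finset Lab2))
          ⊆ asetD ∪ (flexD \ S) := by
        intro i hi
        obtain ⟨-, hi⟩ := Finset.mem_filter.1 hi
        simp only [hgdef] at hi
        split_ifs at hi with ho hc hu
        · exact absurd hi (by decide)
        · exact absurd hi (by decide)
        · exact Finset.mem_union_left _
            (Finset.mem_filter.2 ⟨Finset.mem_univ _, ho, hu⟩)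
        · rcases not_or.1 hc with ⟨hA, hS⟩
          have hA' := not_not.1 hA
          by_cases hu : Lab2.U ∈ Y i
          · exact Finset.mem_union_right _ (Finset.mem_sdiff.2
              ⟨Finset.mem_filter.2 ⟨Finset.mem_univ _, ho, hu, hA'⟩, hS⟩)
          · exact Finset.mem_union_left _
              (Finset.mem_filter.2 ⟨Finset.mem_univ _, ho, hu⟩)
      have L3 : ∀ i, g i ∉ ({Lab2.P, Lab2.Q} : Finset Lab2) := by
        intro i
        simp only [hgdef]
        split_ifs <;> decide
      have c1 : (Finset.univ.filter
          (fun i => g i ∈ ({Lab2.M, Lab2.U, Lab2.B, Lab2.Q} : Finset Lab2))).card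
          ≤ useD.card + k := by
        calc (Finset.univ.filter
            (fun i => g i ∈ ({Lab2.M, Lab2.U, Lab2.B, Lab2.Q} : Finset Lab2))).card
            ≤ (useD ∪ S).card := Finset.card_le_card L1
          _ ≤ useD.card + S.card := Finset.card_union_le _ _
          _ = useD.card + k := by rw [hScard]
      have c2 : (Finset.univ.filter
          (fun i => g i ∈ ({Lab2.A, Lab2.B, Lab2.P, Lab2.Q} : Finset Lab2))).card
          ≤ asetD.card + (flexD.card - k) := by
        calc (Finset.univ.filter
            (fun i => g i ∈ ({Lab2.A, Lab2.B, Lab2.P, Lab2.Q} : Finset Lab2))).card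
            ≤ (asetD ∪ (flexD \ S)).card := Finset.card_le_card L2
          _ ≤ asetD.card + (flexD \ S).card := Finset.card_union_le _ _
          _ = asetD.card + (flexD.card - k) := by rw [Finset.card_sdiff_of_subset hSsub, hScard]
      set a2set := Finset.univ.filter
        (fun i => Lab2.O ∉ Y i ∧ Lab2.U ∉ Y i ∧ Lab2.A ∈ Y i) with ha2set
      set p4set := Finset.univ.filter
        (fun i => Lab2.O ∉ Y i ∧ Lab2.U ∉ Y i ∧ Lab2.A ∉ Y i) with hp4set
      have d1 : Disjoint flexD a2set := by
        rw [Finset.disjoint_left]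
        intro i hi1 hi2
        simp only [hflexD, ha2set, Finset.mem_filter, Finset.mem_univ, true_and] at hi1 hi2
        exact hi2.2.1 hi1.2.1
      have d2 : Disjoint (flexD ∪ a2set) useD := by
        rw [Finset.disjoint_left]
        intro i hi1 hi2
        simp only [Finset.mem_union, hflexD, ha2set, huseD, Finset.mem_filter,
          Finset.mem_univ, true_and] at hi1 hi2
        exact hi1.elim (fun h => hi2.2 h.2.2) (fun h => hi2.2 h.2.2)
      have t1 : flexD.card + a2set.card + useD.card ≤ Δ := by
        have e1 := Finset.card_union_of_disjoint d1
        have e2 := Finset.card_union_of_disjoint d2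
        have e3 : ((flexD ∪ a2set) ∪ useD).card ≤ Δ := by
          calc ((flexD ∪ a2set) ∪ useD).card
              ≤ (Finset.univ : Finset (Fin Δ)).card := Finset.card_le_card (Finset.subset_univ _)
            _ = Δ := by simp
        omega
      have t2 : p4set.card ≤ asetD.card := by
        refine Finset.card_le_card ?_
        intro i hi
        simp only [hp4set, hasetD, Finset.mem_filter, Finset.mem_univ, true_and] at hi ⊢
        exact ⟨hi.1, hi.2.1⟩
      have t3 : asetD.card ≤ a2set.card + p4set.card := by
        have hsub : asetD ⊆ a2set ∪ p4set := by
          intro i hi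
          simp only [Finset.mem_union, hp4set, ha2set, hasetD, Finset.mem_filter,
            Finset.mem_univ, true_and] at hi ⊢
          rcases Classical.em (Lab2.A ∈ Y i) with h | h
          · exact Or.inl ⟨hi.1, hi.2, h⟩
          · exact Or.inr ⟨hi.1, hi.2, h⟩
        calc asetD.card ≤ (a2set ∪ p4set).card := Finset.card_le_card hsub
          _ ≤ a2set.card + p4set.card := Finset.card_union_le _ _
      rcases htr g hg with hcase | hcase | hcase
      · omega
      · obtain ⟨i, hiPQ, -⟩ := hcase
        exact L3 i hiPQ
      · omega
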